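/- Let R : ℕ → ℝ be nonincreasing with R(0) = 1 and R(d) ≥ 0 for all d. Fix D ≥ 1 and choose indices 0 = d₀ < d₁ < ... < d_k = D by letting d_i be minimal with R(d_i) ≤ 2^{-i} (with d_k = D the last value). Then Σ_{i=1}^{k} R(d_{i-1})·√(d_i - d_{i-1}) ≤ 2√2 · √(Σ_{d=0}^{D-1} R(d)). -/
import Mathlib


/-- Subsequence-optimization lemma: for a nonincreasing nonnegative sequence `R` with
`R 0 = 1` and indices `d i` chosen minimal with `R (d i) ≤ 2⁻ⁱ` (last value `d k = D`),
the weighted sum of square roots of block lengths is at most `2√2 · √(Σ_{d<D} R d)`. -/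
theorem subsequence_optimization
    (R : ℕ → ℝ) (hmono : ∀ d, R (d + 1) ≤ R d) (hR0 : R 0 = 1)
    (hnonneg : ∀ d, 0 ≤ R d)
    (D k : ℕ) (hD : 1 ≤ D) (hk : 1 ≤ k)
    (d : ℕ → ℕ) (hd0 : d 0 = 0) (hdk : d k = D)
    (hstrict : ∀ i < k, d i < d (i + 1))
    (hle : ∀ i < k, R (d i) ≤ (1 / 2 : ℝ) ^ i)
    (hmin : ∀ i ≤ k, ∀ m < d i, (1 / 2 : ℝ) ^ i < R m) :
    ∑ i ∈ Finset.range k, R (d i) * Real.sqrt ((d (i + 1) : ℝ) - (d i : ℝ)) ≤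
      2 * Real.sqrt 2 * Real.sqrt (∑ j ∈ Finset.range D, R j) := by
  classical
  set S := ∑ j ∈ Finset.range D, R j with hS
  have hSnn : 0 ≤ S := Finset.sum_nonneg fun j _ => hnonneg j
  have hdle : ∀ i < k, d i ≤ d (i + 1) := fun i hi => (hstrict i hi).le
  have hDnn : ∀ i < k, (0 : ℝ) ≤ (d (i + 1) : ℝ) - d i := by
    intro i hi
    have h := hdle i hi
    have : (d i : ℝ) ≤ d (i + 1) := by exact_mod_cast h
    linarith
  -- block lower bound
  have hblock : ∀ i < k, ((d (i + 1) : ℝ) - d i) * (1 / 2 : ℝ) ^ (i + 1) ≤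
      ∑ j ∈ Finset.Ico (d i) (d (i + 1)), R j := by
    intro i hi
    have hlow : ∀ j ∈ Finset.Ico (d i) (d (i + 1)), (1 / 2 : ℝ) ^ (i + 1) ≤ R j := by
      intro j hj
      exact (hmin (i + 1) hi j (Finset.mem_Ico.mp hj).2).le
    have h := Finset.card_nsmul_le_sum (Finset.Ico (d i) (d (i + 1))) R
      ((1 / 2 : ℝ) ^ (i + 1)) hlow
    rw [Nat.card_Ico, nsmul_eq_mul] at h
    have hcast : ((d (i + 1) - d i : ℕ) : ℝ) = (d (i + 1) : ℝ) - d i := by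
      have h2 := hdle i hi
      push_cast [Nat.cast_sub h2]
      ring
    calc ((d (i + 1) : ℝ) - d i) * (1 / 2 : ℝ) ^ (i + 1)
        = ((d (i + 1) - d i : ℕ) : ℝ) * (1 / 2 : ℝ) ^ (i + 1) := by rw [hcast]
      _ ≤ _ := h
  -- consecutive blocks glue together
  have hblocks : ∀ K, K ≤ k →
      ∑ i ∈ Finset.range K, ∑ j ∈ Finset.Ico (d i) (d (i + 1)), R j
        = ∑ j ∈ Finset.Ico (d 0) (d K), R j := by
    intro K
    induction K with
    | zero => simp
    | succ n ih =>
      intro hK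
      rw [Finset.sum_range_succ, ih (Nat.le_of_succ_le hK)]
      exact Finset.sum_Ico_consecutive _ (by rw [hd0]; exact Nat.zero_le _)
        (hdle n hK)
  have hbsum : ∑ i ∈ Finset.range k, (1 / 2 : ℝ) ^ i * ((d (i + 1) : ℝ) - d i) ≤ 2 * S := by
    have h1 : ∀ i ∈ Finset.range k, (1 / 2 : ℝ) ^ i * ((d (i + 1) : ℝ) - d i) ≤
        2 * ∑ j ∈ Finset.Ico (d i) (d (i + 1)), R j := by
      intro i hi
      have hi' := Finset.mem_range.mp hi
      have hb := hblock i hi'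
      have e : (1 / 2 : ℝ) ^ i = 2 * (1 / 2 : ℝ) ^ (i + 1) := by rw [pow_succ]; ring
      nlinarith [hb]
    calc ∑ i ∈ Finset.range k, (1 / 2 : ℝ) ^ i * ((d (i + 1) : ℝ) - d i)
        ≤ ∑ i ∈ Finset.range k, 2 * ∑ j ∈ Finset.Ico (d i) (d (i + 1)), R j :=
          Finset.sum_le_sum h1
      _ = 2 * ∑ i ∈ Finset.range k, ∑ j ∈ Finset.Ico (d i) (d (i + 1)), R j := by
          rw [Finset.mul_sum]
      _ = 2 * S := by
          rw [hblocks k le_rfl, hd0, hdk, hS, Finset.range_eq_Ico]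
  have hbnn : 0 ≤ ∑ i ∈ Finset.range k, (1 / 2 : ℝ) ^ i * ((d (i + 1) : ℝ) - d i) := by
    apply Finset.sum_nonneg
    intro i hi
    exact mul_nonneg (by positivity) (hDnn i (Finset.mem_range.mp hi))
  have hasum : ∑ i ∈ Finset.range k, (1 / 2 : ℝ) ^ i ≤ 2 := sum_geometric_two_le k
  -- termwise bound
  have hterm : ∀ i ∈ Finset.range k,
      R (d i) * Real.sqrt ((d (i + 1) : ℝ) - d i) ≤
        Real.sqrt ((1 / 2 : ℝ) ^ i) *
          Real.sqrt ((1 / 2 : ℝ) ^ i * ((d (i + 1) : ℝ) - d i)) := by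
    intro i hi
    have hi' := Finset.mem_range.mp hi
    have h1 : Real.sqrt ((1 / 2 : ℝ) ^ i) *
        Real.sqrt ((1 / 2 : ℝ) ^ i * ((d (i + 1) : ℝ) - d i))
        = (1 / 2 : ℝ) ^ i * Real.sqrt ((d (i + 1) : ℝ) - d i) := by
      rw [Real.sqrt_mul (by positivity : (0:ℝ) ≤ (1 / 2 : ℝ) ^ i), ← mul_assoc,
        Real.mul_self_sqrt (by positivity : (0:ℝ) ≤ (1 / 2 : ℝ) ^ i)]
    rw [h1]
    exact mul_le_mul_of_nonneg_right (hle i hi') (Real.sqrt_nonneg _)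
  have hCS := Finset.sum_mul_sq_le_sq_mul_sq (Finset.range k)
    (fun i => Real.sqrt ((1 / 2 : ℝ) ^ i))
    (fun i => Real.sqrt ((1 / 2 : ℝ) ^ i * ((d (i + 1) : ℝ) - d i)))
  have hsq1 : ∑ i ∈ Finset.range k, Real.sqrt ((1 / 2 : ℝ) ^ i) ^ 2
      = ∑ i ∈ Finset.range k, (1 / 2 : ℝ) ^ i := by
    apply Finset.sum_congr rfl
    intro i _
    exact Real.sq_sqrt (by positivity)
  have hsq2 : ∑ i ∈ Finset.range k,
      Real.sqrt ((1 / 2 : ℝ) ^ i * ((d (i + 1) : ℝ) - d i)) ^ 2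
      = ∑ i ∈ Finset.range k, (1 / 2 : ℝ) ^ i * ((d (i + 1) : ℝ) - d i) := by
    apply Finset.sum_congr rfl
    intro i hi
    exact Real.sq_sqrt (mul_nonneg (by positivity) (hDnn i (Finset.mem_range.mp hi)))
  rw [hsq1, hsq2] at hCS
  set T := ∑ i ∈ Finset.range k, Real.sqrt ((1 / 2 : ℝ) ^ i) *
      Real.sqrt ((1 / 2 : ℝ) ^ i * ((d (i + 1) : ℝ) - d i)) with hT
  have hTnn : 0 ≤ T := Finset.sum_nonneg fun i _ =>
    mul_nonneg (Real.sqrt_nonneg _) (Real.sqrt_nonneg _)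
  have hT2 : T ^ 2 ≤ 8 * S := by
    calc T ^ 2 ≤ (∑ i ∈ Finset.range k, (1 / 2 : ℝ) ^ i) *
        (∑ i ∈ Finset.range k, (1 / 2 : ℝ) ^ i * ((d (i + 1) : ℝ) - d i)) := hCS
      _ ≤ 2 * (2 * S) := mul_le_mul hasum hbsum hbnn (by norm_num)
      _ ≤ 8 * S := by linarith
  have hfinal : T ≤ 2 * Real.sqrt 2 * Real.sqrt S := by
    have h8 : Real.sqrt (8 * S) = 2 * Real.sqrt 2 * Real.sqrt S := by
      rw [show (8 : ℝ) * S = 2 ^ 2 * (2 * S) by ring, Real.sqrt_mul (by positivity),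
        Real.sqrt_sq (by norm_num : (0:ℝ) ≤ 2), Real.sqrt_mul (by norm_num : (0:ℝ) ≤ 2)]
      ring
    rw [← h8]
    exact (Real.le_sqrt hTnn (by positivity)).mpr hT2
  calc ∑ i ∈ Finset.range k, R (d i) * Real.sqrt ((d (i + 1) : ℝ) - (d i : ℝ))
      ≤ T := Finset.sum_le_sum hterm
    _ ≤ 2 * Real.sqrt 2 * Real.sqrt S := hfinal
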